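/- In the graph-based congestion game, suppose at a pure Nash equilibrium every occupied resource r ∈ S satisfies p_r/(n_r+1)² ≤ 2·Σ_{r'∈adj(r)} p_{r'}, with Σ_{r∈S} p_r ≤ 1 and n_r ≥ 1 for r ∈ S. Then the total social cost Σ_{r∈S} n_r·C^p_r(n_r) + (N − Σ_{r∈S} n_r)·1 is at least N − 3/4, where C^p_r(n) = 1 + 2·Σ_{r'∈adj(r)} p_{r'} − p_r/n². -/

import Mathlib

open Finset

/-- social cost lower bound N − 3/4 in Situation 2. -/
theorem stmt11 {V : Type*} [Fintype V] [DecidableEq V]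
    (G : SimpleGraph V) [DecidableRel G.Adj]
    (p : V → ℝ) (hp : ∀ r, 0 ≤ p r)
    (S : Finset V) (hpS : ∑ r ∈ S, p r ≤ 1)
    (N : ℕ) (n : V → ℕ)
    (hn1 : ∀ r ∈ S, 1 ≤ n r) (hnN : ∑ r ∈ S, n r ≤ N)
    (C : V → ℕ → ℝ)
    (hC : ∀ r m, C r m = 1 + 2 * (∑ r' ∈ G.neighborFinset r, p r') - p r / (m : ℝ) ^ 2)
    (hdev : ∀ r ∈ S,
      p r / ((n r : ℝ) + 1) ^ 2 ≤ 2 * ∑ r' ∈ G.neighborFinset r, p r') :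
    (N : ℝ) - 3 / 4 ≤
      (∑ r ∈ S, (n r : ℝ) * C r (n r)) + ((N : ℝ) - ∑ r ∈ S, (n r : ℝ)) * 1 := by
  have key : ∀ r ∈ S, (n r : ℝ) - 3 / 4 * p r ≤ (n r : ℝ) * C r (n r) := by
    intro r hr
    have hx1 : (1 : ℝ) ≤ (n r : ℝ) := by exact_mod_cast hn1 r hr
    have hx0 : (0 : ℝ) < (n r : ℝ) := lt_of_lt_of_le one_pos hx1
    set x : ℝ := (n r : ℝ) with hxdef
    set A : ℝ := ∑ r' ∈ G.neighborFinset r, p r' with hA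
    have hA0 : 0 ≤ A := Finset.sum_nonneg fun i _ => hp i
    have hd := hdev r hr
    have hpr := hp r
    rw [hC, ← hxdef]
    have hx2 : (0:ℝ) < x ^ 2 := by positivity
    have hx12 : (0:ℝ) < (x + 1) ^ 2 := by positivity
    have h1 : p r ≤ 2 * A * (x + 1) ^ 2 := by
      rw [div_le_iff₀ hx12] at hd; linarith
    have ht : p r / x ^ 2 * x ^ 2 = p r := div_mul_cancel₀ _ (ne_of_gt hx2)
    set t : ℝ := p r / x ^ 2 with htdef
    have ht0 : 0 ≤ t := div_nonneg hpr hx2.le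
    have hpt : p r = t * x ^ 2 := by rw [← ht]
    rw [hpt] at h1 ⊢
    -- goal: x - 3/4 * (t * x^2) ≤ x * (1 + 2*A - t)
    nlinarith [mul_nonneg ht0 (sub_nonneg.mpr hx1), mul_le_mul_of_nonneg_left h1 hx0.le,
      mul_nonneg (mul_nonneg ht0 (sub_nonneg.mpr hx1)) (sq_nonneg x),
      mul_nonneg (mul_nonneg ht0 (sub_nonneg.mpr hx1)) (sq_nonneg (x+1)),
      mul_nonneg hA0 hx0.le, sq_nonneg (x - 1)]
  have hsum : ∑ r ∈ S, ((n r : ℝ) - 3 / 4 * p r) ≤ ∑ r ∈ S, (n r : ℝ) * C r (n r) :=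
    Finset.sum_le_sum key
  rw [Finset.sum_sub_distrib, ← Finset.mul_sum] at hsum
  linarith
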